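/- Let G be a connected unweighted graph with incidence matrix B and Laplacian L = BBᵀ, and let γ ∈ [0, π/2). For every x ∈ Im(Bᵀ) with ‖x‖₂ ≤ γ, the matrix L_{sinc(x)} = B diag(sinc(x)) Bᵀ satisfies L_{sinc(x)} ⪰ sinc(γ) L in the Loewner order. -/

import Mathlib

open Matrix

/-- The unnormalized sinc function, `sinc t = sin t / t` with `sinc 0 = 1`. -/
noncomputable def sinc (t : ℝ) : ℝ := if t = 0 then 1 else Real.sin t / t

/-- The Euclidean (2-)norm of a real vector. -/
noncomputable def norm2 {k : ℕ} (v : Fin k → ℝ) : ℝ := Real.sqrt (∑ i, v i ^ 2)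

lemma sinc_neg (t : ℝ) : sinc (-t) = sinc t := by
  unfold sinc
  rcases eq_or_ne t 0 with rfl | ht
  · simp
  · rw [if_neg (neg_ne_zero.mpr ht), if_neg ht, Real.sin_neg, neg_div_neg_eq]

/-- sinc is antitone on `[0, π]`. -/
lemma sinc_anti {a b : ℝ} (ha : 0 ≤ a) (hab : a ≤ b) (hb : b ≤ Real.pi) :
    sinc b ≤ sinc a := by
  rcases ha.eq_or_lt with rfl | ha'
  · -- a = 0, sinc 0 = 1
    rcases hab.eq_or_lt with rfl | hb'
    · simp
    · unfold sinc
      rw [if_pos rfl, if_neg hb'.ne']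
      exact div_le_one_of_le₀ (Real.sin_le hb'.le) hb'.le
  · have hb' : 0 < b := lt_of_lt_of_le ha' hab
    unfold sinc
    rw [if_neg ha'.ne', if_neg hb'.ne']
    rw [div_le_div_iff₀ hb' ha']
    -- sin b * a ≤ sin a * b, use concavity: sin a ≥ (a/b) sin b
    have key : (a / b) * Real.sin b ≤ Real.sin a := by
      have hd1 : a / b ≤ 1 := (div_le_one hb').mpr hab
      have h := strictConcaveOn_sin_Icc.concaveOn.2
        (Set.mem_Icc.mpr ⟨le_rfl, Real.pi_pos.le⟩) (Set.mem_Icc.mpr ⟨hb'.le, hb⟩)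
        (sub_nonneg.mpr hd1)
        (le_of_lt (div_pos ha' hb')) (sub_add_cancel 1 (a / b))
      simp only [smul_eq_mul, mul_zero, Real.sin_zero, zero_add] at h
      rw [div_mul_cancel₀ _ hb'.ne'] at h
      linarith
    calc Real.sin b * a = (a / b * Real.sin b) * b := by
          field_simp
      _ ≤ Real.sin a * b := by
          apply mul_le_mul_of_nonneg_right key hb'.le

lemma sinc_ge {t γ : ℝ} (ht : |t| ≤ γ) (hγ : γ < Real.pi / 2) : sinc γ ≤ sinc t := by
  have h1 : sinc t = sinc |t| := by
    rcases abs_choice t with h | h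
    · rw [h]
    · rw [h, sinc_neg]
  rw [h1]
  exact sinc_anti (abs_nonneg t) ht (le_trans hγ.le (by linarith [Real.pi_pos]))

/-- For a connected unweighted graph with incidence matrix `B` and
Laplacian `L = BBᵀ`, and `γ ∈ [0, π/2)`, every `x ∈ Im(Bᵀ)` with `‖x‖₂ ≤ γ` satisfies
`B diag(sinc x) Bᵀ ⪰ sinc(γ) L` in the Loewner order. -/
theorem scaled_laplacian_loewner_bound
    (n m : ℕ) (B : Matrix (Fin n) (Fin m) ℝ)
    (hconn : ∀ x : Fin n → ℝ, Bᵀ.mulVec x = 0 ↔ ∃ c : ℝ, x = fun _ => c)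
    (γ : ℝ) (hγ : 0 ≤ γ ∧ γ < Real.pi / 2)
    (x : Fin m → ℝ) (hx : ∃ ξ : Fin n → ℝ, x = Bᵀ.mulVec ξ)
    (hxnorm : norm2 x ≤ γ) :
    (B * Matrix.diagonal (fun e => sinc (x e)) * Bᵀ - sinc γ • (B * Bᵀ)).PosSemidef := by
  obtain ⟨hγ0, hγπ⟩ := hγ
  -- each entry bound
  have habs : ∀ e, |x e| ≤ γ := by
    intro e
    refine le_trans ?_ hxnorm
    unfold norm2
    rw [← Real.sqrt_sq_eq_abs]
    apply Real.sqrt_le_sqrt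
    exact Finset.single_le_sum (f := fun i => x i ^ 2) (fun i _ => sq_nonneg _)
      (Finset.mem_univ e)
  have hnn : ∀ e, 0 ≤ sinc (x e) - sinc γ := fun e =>
    sub_nonneg.mpr (sinc_ge (habs e) hγπ)
  have hrw : B * Matrix.diagonal (fun e => sinc (x e)) * Bᵀ - sinc γ • (B * Bᵀ)
      = B * Matrix.diagonal (fun e => sinc (x e) - sinc γ) * Bᴴ := by
    have : (Matrix.diagonal (fun e => sinc (x e) - sinc γ))
        = Matrix.diagonal (fun e => sinc (x e)) - sinc γ • (1 : Matrix (Fin m) (Fin m) ℝ) := by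
      rw [← Matrix.diagonal_one, ← Matrix.diagonal_smul, ← Matrix.diagonal_sub]
      ext i j
      by_cases h : i = j <;> simp [Matrix.diagonal_apply, Matrix.one_apply, h]
    rw [this, Matrix.conjTranspose_eq_transpose_of_trivial]
    rw [Matrix.mul_sub, Matrix.sub_mul]
    congr 1
    rw [Matrix.mul_smul, Matrix.smul_mul, Matrix.mul_one]
  rw [hrw]
  exact (Matrix.posSemidef_diagonal_iff.mpr hnn).mul_mul_conjTranspose_same B
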